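/- With M the 4×4 matrix having rows (D,D,D,D), (0,1,1,0), (0,0,1,−1), (0,0,0,D^k) (D ≥ 2, k ≥ 2), the lattice point u = (D+1, 1, 0, 1) = ((D^{k−1}−1)/D^k)V_1 + ((D^k−1)/D^k)V_2 + (1/D^k)V_3 + (1/D^k)V_4 has weight 1 + 1/D, and for any prime p with p ≡ 1 + D^{k−1} (mod D^k), the weight of the p-multiple {pu} (computed coordinatewise on the fractional parts of the barycentric coefficients) is at least 1 + {p/D^k} > 1 + 1/D; hence the weight function is not stable under the p-action even though p ≡ 1 (mod D). -/

import Mathlib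

set_option maxHeartbeats 1000000 in
/-- For `D ≥ 2`, `k ≥ 2` and the 4×4 matrix `M` with rows `(D,D,D,D)`, `(0,1,1,0)`,
`(0,0,1,−1)`, `(0,0,0,D^k)`: the barycentric coefficient vector
`r = ((D^(k−1)−1)/D^k, (D^k−1)/D^k, 1/D^k, 1/D^k)` gives the lattice point
`u = Mr = (D+1, 1, 0, 1)` of weight `1 + 1/D`, and for any prime `p` with
`p ≡ 1 + D^(k−1) (mod D^k)` the weight of the `p`-multiple `{pr}` is at least
`1 + {p/D^k} > 1 + 1/D`; hence the weight function is not stable under the `p`-action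
even though `p ≡ 1 (mod D)`. -/
theorem four_dim_counterexample_p_action (D k : ℕ) (hD : 2 ≤ D) (hk : 2 ≤ k)
    (M : Matrix (Fin 4) (Fin 4) ℤ)
    (hM : M = !![(D : ℤ), D, D, D; 0, 1, 1, 0; 0, 0, 1, -1; 0, 0, 0, (D : ℤ) ^ k])
    (r : Fin 4 → ℚ)
    (hr : r = ![((D : ℚ) ^ (k - 1) - 1) / (D : ℚ) ^ k, ((D : ℚ) ^ k - 1) / (D : ℚ) ^ k,
      1 / (D : ℚ) ^ k, 1 / (D : ℚ) ^ k])
    (p : ℕ) (hp : p.Prime) (hpcong : ((D : ℤ) ^ k) ∣ ((p : ℤ) - (1 + (D : ℤ) ^ (k - 1)))) :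
    (fun i => ∑ j, (M i j : ℚ) * r j) = ![(D : ℚ) + 1, 1, 0, 1] ∧
      ∑ i, r i = 1 + 1 / (D : ℚ) ∧
      ((D : ℤ) ∣ ((p : ℤ) - 1)) ∧
      Int.fract ((p : ℚ) / (D : ℚ) ^ k) > 1 / (D : ℚ) ∧
      ∑ i, Int.fract ((p : ℚ) * r i) ≥ 1 + Int.fract ((p : ℚ) / (D : ℚ) ^ k) ∧
      ∑ i, Int.fract ((p : ℚ) * r i) ≠ ∑ i, r i := by
  obtain ⟨k', rfl⟩ : ∃ k', k = k' + 2 := ⟨k - 2, by omega⟩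
  obtain ⟨m, hm⟩ := hpcong
  rw [show k' + 2 - 1 = k' + 1 from rfl] at hm hr
  have hD1 : (1:ℚ) < (D:ℚ) := by exact_mod_cast (by omega : 1 < D)
  have hD2 : (2:ℚ) ≤ (D:ℚ) := by exact_mod_cast hD
  have hD0 : (D:ℚ) ≠ 0 := by positivity
  set Q : ℚ := (D:ℚ) ^ (k' + 2) with hQdef
  set A : ℚ := (D:ℚ) ^ (k' + 1) with hAdef
  have hAQ : A * (D:ℚ) = Q := by rw [hAdef, hQdef]; ring
  have hA2 : (D:ℚ) ^ k' * ((D:ℚ) * (D:ℚ)) = Q := by rw [hQdef]; ring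
  have hAA : A * A = (D:ℚ) ^ k' * Q := by rw [hQdef, hAdef]; ring
  clear_value Q A
  have hQ1 : 1 < Q := by rw [hQdef]; exact one_lt_pow₀ hD1 (by omega)
  have hA1 : 1 < A := by rw [hAdef]; exact one_lt_pow₀ hD1 (by omega)
  have hQ0 : 0 < Q := by linarith
  have hQne : Q ≠ 0 := ne_of_gt hQ0
  have h1AQ : 1 + A < Q := by nlinarith [hAQ]
  have hp' : (p:ℚ) = 1 + A + (m:ℚ) * Q := by
    have h : (p:ℤ) = 1 + (D:ℤ)^(k'+1) + (D:ℤ)^(k'+2) * m := by omega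
    have h2 := congrArg (fun z : ℤ => (z:ℚ)) h
    push_cast at h2
    rw [h2, ← hAdef, ← hQdef]; ring
  have fract_eq : ∀ (x t : ℚ) (n : ℤ), x = t + n → 0 ≤ t → t < 1 → Int.fract x = t := by
    intro x t n h h0 h1
    rw [h, Int.fract_add_intCast, Int.fract_eq_self.2 ⟨h0, h1⟩]
  have hr0 : r 0 = (A - 1) / Q := by rw [hr]; rfl
  have hr1 : r 1 = (Q - 1) / Q := by rw [hr]; rfl
  have hr2 : r 2 = 1 / Q := by rw [hr]; rfl
  have hr3 : r 3 = 1 / Q := by rw [hr]; rfl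
  have h0 : Int.fract ((p:ℚ) * r 0) = (Q - 1) / Q := by
    refine fract_eq _ _ ((D:ℤ)^k' - 1 + m * ((D:ℤ)^(k'+1) - 1)) ?_ ?_ ?_
    · rw [hr0, hp']
      push_cast
      rw [← hAdef]
      field_simp
      linear_combination hAA
    · apply div_nonneg (by linarith) hQ0.le
    · rw [div_lt_one hQ0]; linarith
  have h1 : Int.fract ((p:ℚ) * r 1) = (Q - 1 - A) / Q := by
    refine fract_eq _ _ ((p:ℤ) - 1 - m) ?_ ?_ ?_
    · rw [hr1]
      push_cast
      rw [hp']
      field_simp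
      ring
    · apply div_nonneg (by linarith) hQ0.le
    · rw [div_lt_one hQ0]; linarith
  have h23 : ∀ i : Fin 4, r i = 1 / Q → Int.fract ((p:ℚ) * r i) = (1 + A) / Q := by
    intro i hi
    refine fract_eq _ _ m ?_ ?_ ?_
    · rw [hi, hp']; field_simp
    · apply div_nonneg (by linarith) hQ0.le
    · rw [div_lt_one hQ0]; linarith
  have h2 : Int.fract ((p:ℚ) * r 2) = (1 + A) / Q := h23 2 hr2
  have h3 : Int.fract ((p:ℚ) * r 3) = (1 + A) / Q := h23 3 hr3
  have hfq : Int.fract ((p:ℚ) / Q) = (1 + A) / Q := by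
    refine fract_eq _ _ m ?_ ?_ ?_
    · rw [hp']; field_simp
    · apply div_nonneg (by linarith) hQ0.le
    · rw [div_lt_one hQ0]; linarith
  have hsumr : ∑ i, r i = 1 + 1 / (D:ℚ) := by
    rw [Fin.sum_univ_four, hr0, hr1, hr2, hr3]
    field_simp
    nlinarith [hAQ]
  refine ⟨?_, hsumr, ?_, ?_, ?_, ?_⟩
  · funext i
    rw [hM]
    fin_cases i
    · simp [Fin.sum_univ_four, hr0, hr1, hr2, hr3]
      field_simp
      linear_combination hAQ
    · simp [Fin.sum_univ_four, hr0, hr1, hr2, hr3]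
      field_simp
      ring
    · simp [Fin.sum_univ_four, hr0, hr1, hr2, hr3]
    · simp [Fin.sum_univ_four, hr0, hr1, hr2, hr3]
      rw [← hQdef]
      field_simp
  · have hd1 : (D:ℤ) ∣ (D:ℤ)^(k'+1) := dvd_pow_self _ (by omega)
    have hd2 : (D:ℤ) ∣ (D:ℤ)^(k'+2) := dvd_pow_self _ (by omega)
    obtain ⟨a, ha⟩ := hd1; obtain ⟨b, hb⟩ := hd2
    exact ⟨a + b * m, by rw [show (p:ℤ) - 1 = (D:ℤ)^(k'+1) + (D:ℤ)^(k'+2) * m by omega, ha, hb]; ring⟩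
  · rw [hfq, gt_iff_lt, div_lt_div_iff₀ (by linarith : (0:ℚ) < (D:ℚ)) hQ0]
    have hx : (1 + A) * (D:ℚ) = (D:ℚ) + Q := by rw [← hAQ]; ring
    linarith
  · rw [Fin.sum_univ_four, h0, h1, h2, h3, hfq]
    rw [ge_iff_le, ← add_div, ← add_div, ← add_div]
    have he : 1 + (1 + A) / Q = (Q + (1 + A)) / Q := by field_simp
    rw [he, div_le_div_iff₀ hQ0 hQ0]
    nlinarith [hQ0, hQ1]
  · simp only [Fin.sum_univ_four]
    rw [h0, h1, h2, h3, hr0, hr1, hr2, hr3]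
    intro h
    have hL : (Q - 1) / Q + (Q - 1 - A) / Q + (1 + A) / Q + (1 + A) / Q = 2 + A / Q := by
      field_simp; ring
    have hR : (A - 1) / Q + (Q - 1) / Q + 1 / Q + 1 / Q = 1 + A / Q := by
      field_simp; ring
    rw [hL, hR] at h
    linarith
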